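/- Let V be a 3-dimensional real vector space with a symmetric bilinear form g of rank 2, and let k be a nonzero vector with g(k,·)=0. If h is a symmetric bilinear form on the dual space V* satisfying g∘h∘g = g (i.e., h(g(u,·),g(v,·)) = g(u,v) for all u,v) and h(ℓ,·)=0 for a fixed covector ℓ with ℓ(k) = -1, then h is unique: any two such h agree. -/
import Mathlib


/-- Uniqueness of the "inverse" degenerate first fundamental form on a null
hypersurface: if `g` is a symmetric bilinear form of rank 2 on a 3-dimensional
real vector space `V` whose degeneration vector is `k ≠ 0` (`g k = 0`), and
`ℓ` is a covector with `ℓ k = -1`, then a symmetric bilinear form `h` on the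
dual space satisfying `h (g u) (g v) = g u v` and `h ℓ = 0` is unique. -/
theorem stmt_0 (V : Type*) [AddCommGroup V] [Module ℝ V] [FiniteDimensional ℝ V]
    (hdim : Module.finrank ℝ V = 3)
    (g : V →ₗ[ℝ] V →ₗ[ℝ] ℝ)
    (hgsymm : ∀ u v : V, g u v = g v u)
    (hrank : Module.finrank ℝ (LinearMap.range g) = 2)
    (k : V) (hk : k ≠ 0) (hgk : g k = 0)
    (ℓ : Module.Dual ℝ V) (hℓk : ℓ k = -1)
    (h₁ h₂ : Module.Dual ℝ V →ₗ[ℝ] Module.Dual ℝ V →ₗ[ℝ] ℝ)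
    (h₁symm : ∀ α β, h₁ α β = h₁ β α) (h₂symm : ∀ α β, h₂ α β = h₂ β α)
    (h₁g : ∀ u v : V, h₁ (g u) (g v) = g u v) (h₂g : ∀ u v : V, h₂ (g u) (g v) = g u v)
    (h₁ℓ : h₁ ℓ = 0) (h₂ℓ : h₂ ℓ = 0) :
    h₁ = h₂ := by
  have hℓnot : ℓ ∉ LinearMap.range g := by
    rintro ⟨u, rfl⟩
    have : g u k = -1 := hℓk
    rw [hgsymm u k, hgk] at this
    simp at this
  have hlt : LinearMap.range g < LinearMap.range g ⊔ (ℝ ∙ ℓ) := by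
    refine lt_of_le_of_ne le_sup_left ?_
    intro h
    exact hℓnot (h ▸ Submodule.mem_sup_right (Submodule.mem_span_singleton_self ℓ))
  have hdual : Module.finrank ℝ (Module.Dual ℝ V) = 3 := by
    rw [Subspace.dual_finrank_eq, hdim]
  have htop : LinearMap.range g ⊔ (ℝ ∙ ℓ) = ⊤ := by
    apply Submodule.eq_top_of_finrank_eq
    have h3 := Submodule.finrank_lt_finrank_of_lt hlt
    rw [hrank] at h3
    have hle : Module.finrank ℝ ↥(LinearMap.range g ⊔ (ℝ ∙ ℓ)) ≤ 3 := by
      rw [← hdual]; exact Submodule.finrank_le _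
    rw [hdual]; omega
  ext α β
  have hα : α ∈ LinearMap.range g ⊔ (ℝ ∙ ℓ) := htop ▸ Submodule.mem_top
  have hβ : β ∈ LinearMap.range g ⊔ (ℝ ∙ ℓ) := htop ▸ Submodule.mem_top
  rcases Submodule.mem_sup.mp hα with ⟨x, ⟨u, rfl⟩, y, hy, rfl⟩
  rcases Submodule.mem_sup.mp hβ with ⟨x', ⟨v, rfl⟩, y', hy', rfl⟩
  rcases Submodule.mem_span_singleton.mp hy with ⟨c, rfl⟩
  rcases Submodule.mem_span_singleton.mp hy' with ⟨d, rfl⟩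
  have e1 : ∀ γ, h₁ ℓ γ = 0 := fun γ => by rw [h₁ℓ]; rfl
  have e2 : ∀ γ, h₂ ℓ γ = 0 := fun γ => by rw [h₂ℓ]; rfl
  simp only [map_add, map_smul, LinearMap.add_apply, LinearMap.smul_apply,
    smul_eq_mul, e1, e2, h₁symm _ (c • ℓ), h₂symm _ (c • ℓ), map_smul]
  simp [e1, e2, h₁g, h₂g, h₁symm (g u) ℓ, h₂symm (g u) ℓ]
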